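/- Let A be a discrete valuation ring with maximal ideal 𝔪 whose integral closure in any finite extension of its fraction field is a finite A-module (i.e., A is Japanese/N-2), and let B be a local A-algebra that is an integral domain and finite free as an A-module. Assume there exists m > 0 such that b^m ∈ A for every b ∈ B. Then there exists r > 0 such that for all b, b' ∈ B, if b ∉ 𝔪·B and b' ∉ 𝔪·B, then b·b' ∉ 𝔪^r·B. -/

import Mathlib

universe u

open scoped nonZeroDivisors

set_option maxHeartbeats 1000000 in
set_option synthInstance.maxHeartbeats 400000 in
/-- Let `A` be a Japanese (N-2) discrete valuation ring with maximal
ideal `𝔪`, and `B` a finite free local `A`-algebra which is an integral domain, with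
`b ^ m ∈ A` for all `b ∈ B` for some `m > 0`.  Then there is `r > 0` such that for all
`b, b' ∈ B`, if `b ∉ 𝔪·B` and `b' ∉ 𝔪·B` then `b * b' ∉ 𝔪^r·B`. -/
theorem stmt1 {A : Type u} [CommRing A] [IsDomain A] [IsDiscreteValuationRing A]
    (hJapanese : ∀ (L : Type u) [Field L] [Algebra A L] [Algebra (FractionRing A) L]
      [IsScalarTower A (FractionRing A) L],
      FiniteDimensional (FractionRing A) L → Module.Finite A (integralClosure A L))
    {B : Type u} [CommRing B] [IsDomain B] [IsLocalRing B] [Algebra A B]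
    [Module.Finite A B] [Module.Free A B]
    (m : ℕ) (hm : 0 < m) (hpow : ∀ b : B, ∃ a : A, algebraMap A B a = b ^ m) :
    ∃ r : ℕ, 0 < r ∧ ∀ b b' : B,
      b ∉ Ideal.map (algebraMap A B) (IsLocalRing.maximalIdeal A) →
      b' ∉ Ideal.map (algebraMap A B) (IsLocalRing.maximalIdeal A) →
      b * b' ∉ Ideal.map (algebraMap A B) (IsLocalRing.maximalIdeal A ^ r) := by
  classical
  have hinj : Function.Injective (algebraMap A B) := FaithfulSMul.algebraMap_injective A B
  obtain ⟨ϖ, hϖ⟩ := IsDiscreteValuationRing.exists_irreducible A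
  have hϖ0 : ϖ ≠ 0 := hϖ.ne_zero
  have hunif : IsLocalRing.maximalIdeal A = Ideal.span {ϖ} :=
    (IsDiscreteValuationRing.irreducible_iff_uniformizer ϖ).mp hϖ
  -- membership in `𝔪^k B` is divisibility by `ϖ^k`
  have hmem : ∀ (k : ℕ) (b : B),
      b ∈ Ideal.map (algebraMap A B) (IsLocalRing.maximalIdeal A ^ k) ↔
        algebraMap A B (ϖ ^ k) ∣ b := by
    intro k b
    rw [hunif, Ideal.span_singleton_pow, Ideal.map_span, Set.image_singleton,
      Ideal.mem_span_singleton]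
  -- set up the fraction fields
  let L := FractionRing B
  have hinjBL : Function.Injective (algebraMap B L) := IsFractionRing.injective B L
  haveI : FaithfulSMul A L := by
    refine (faithfulSMul_iff_algebraMap_injective A L).mpr ?_
    rw [IsScalarTower.algebraMap_eq A B L]
    exact hinjBL.comp hinj
  letI : Algebra (FractionRing A) L := FractionRing.liftAlgebra A L
  haveI : IsScalarTower A (FractionRing A) L := FractionRing.isScalarTower_liftAlgebra A L
  haveI : IsLocalization (Algebra.algebraMapSubmonoid B A⁰) L := by
    refine ⟨⟨?_, ?_, ?_⟩⟩
    · rintro ⟨_, a, ha, rfl⟩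
      simp only
      rw [← IsScalarTower.algebraMap_apply]
      exact (IsUnit.mk0 _ (by
        simp only [ne_eq, map_eq_zero_iff _ (FaithfulSMul.algebraMap_injective A L)]
        exact nonZeroDivisors.ne_zero ha))
    · intro z
      obtain ⟨⟨x, s⟩, hxs⟩ := IsLocalization.surj B⁰ z
      obtain ⟨a, ha⟩ := hpow s
      have hs0 : (s : B) ≠ 0 := nonZeroDivisors.ne_zero s.2
      have ha0 : a ≠ 0 := by
        intro h; apply hs0; subst h
        have := ha.symm
        rw [map_zero] at this
        exact pow_eq_zero_iff hm.ne' |>.mp this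
      refine ⟨⟨x * s ^ (m - 1), ⟨algebraMap A B a, a, mem_nonZeroDivisors_of_ne_zero ha0, rfl⟩⟩, ?_⟩
      simp only
      have : algebraMap A B a = (s : B) ^ m := ha
      rw [this, map_mul, map_pow, map_pow]
      calc z * algebraMap B L s ^ m = (z * algebraMap B L s) * algebraMap B L s ^ (m-1) := by
            rw [mul_assoc, ← pow_succ']
            congr 2
            omega
        _ = algebraMap B L x * algebraMap B L s ^ (m - 1) := by rw [hxs]
    · intro x y h
      exact ⟨1, by simpa using hinjBL h⟩
  haveI : FiniteDimensional (FractionRing A) L := Module.Finite.of_isLocalization A B A⁰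
  have hC : Module.Finite A (integralClosure A L) := hJapanese L inferInstance
  -- every integral element of `L`, multiplied by a fixed power of `ϖ`, lands in `B`
  have key : ∀ c : integralClosure A L, ∃ n : ℕ, ∃ b : B,
      algebraMap B L b = algebraMap A L (ϖ ^ n) * (c : L) := by
    intro c
    obtain ⟨⟨x, t⟩, hxt⟩ := IsLocalization.surj (Algebra.algebraMapSubmonoid B A⁰) (c : L)
    obtain ⟨a, haA0, hat⟩ := t.2
    have ha0 : a ≠ 0 := nonZeroDivisors.ne_zero haA0
    obtain ⟨n, u, hu⟩ := IsDiscreteValuationRing.eq_unit_mul_pow_irreducible ha0 hϖ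
    refine ⟨n, algebraMap A B ((u⁻¹ : Aˣ) : A) * x, ?_⟩
    have htL : algebraMap B L (t : B) = algebraMap A L a := by
      rw [← hat, ← IsScalarTower.algebraMap_apply]
    have hxt' : (c : L) * algebraMap B L (t : B) = algebraMap B L x := hxt
    have hϖn : (ϖ : A) ^ n = ((u⁻¹ : Aˣ) : A) * a := by
      rw [hu]; rw [← mul_assoc]
      simp
    rw [hϖn, map_mul, map_mul, ← IsScalarTower.algebraMap_apply, ← htL, ← hxt']
    ring
  choose nfun bfun hfun using key
  obtain ⟨s, hs⟩ := Module.Finite.fg_top (R := A) (M := integralClosure A L)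
  set N : ℕ := s.sup nfun with hN
  -- uniform statement with the fixed `N`
  have hNkey : ∀ x : L, IsIntegral A x → ∃ b : B,
      algebraMap B L b = algebraMap A L (ϖ ^ N) * x := by
    intro x hx
    have hxC : (⟨x, hx⟩ : integralClosure A L) ∈ Submodule.span A (s : Set (integralClosure A L)) := by
      rw [hs]; trivial
    have : ∀ c : integralClosure A L, c ∈ Submodule.span A (s : Set (integralClosure A L)) →
        ∃ b : B, algebraMap B L b = algebraMap A L (ϖ ^ N) * (c : L) := by
      intro c hc
      induction hc using Submodule.span_induction with
      | mem c hcs =>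
        refine ⟨algebraMap A B (ϖ ^ (N - nfun c)) * bfun c, ?_⟩
        rw [map_mul, hfun c, ← IsScalarTower.algebraMap_apply, ← mul_assoc,
          ← map_mul, ← pow_add]
        congr 3
        have : nfun c ≤ N := Finset.le_sup hcs
        omega
      | zero => exact ⟨0, by simp⟩
      | add c d _ _ hc hd =>
        obtain ⟨b1, hb1⟩ := hc
        obtain ⟨b2, hb2⟩ := hd
        exact ⟨b1 + b2, by push_cast [map_add, hb1, hb2]; ring⟩
      | smul a c _ hc =>
        obtain ⟨b1, hb1⟩ := hc
        refine ⟨a • b1, ?_⟩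
        have : ((a • c : integralClosure A L) : L) = a • (c : L) := rfl
        rw [this, Algebra.smul_def, map_mul _ (algebraMap A B a) b1,
          ← IsScalarTower.algebraMap_apply, hb1, Algebra.smul_def]
        ring
    exact this ⟨x, hx⟩ hxC
  -- Lemma A : if `ϖ^((k+N)m) ∣ a` with `aB = b^m`, then `ϖ^k ∣ b` in `B`.
  have lemA : ∀ (k : ℕ) (b : B) (a : A), algebraMap A B a = b ^ m →
      ϖ ^ ((k + N) * m) ∣ a → algebraMap A B (ϖ ^ k) ∣ b := by
    intro k b a hab ⟨d, hd⟩
    by_cases hb0 : b = 0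
    · simp [hb0]
    set q : L := algebraMap A L ϖ with hq
    have hq0 : q ≠ 0 := by
      simp only [hq, ne_eq, map_eq_zero_iff _ (FaithfulSMul.algebraMap_injective A L)]
      exact hϖ0
    set x : L := algebraMap B L b * (q ^ (k + N))⁻¹ with hxdef
    have hxm : x ^ m = algebraMap A L d := by
      rw [hxdef, mul_pow, ← map_pow, ← hab, ← IsScalarTower.algebraMap_apply, hd]
      rw [inv_pow, ← pow_mul, map_mul, map_pow]
      rw [mul_comm ((algebraMap A L ϖ) ^ ((k+N)*m)), mul_assoc]
      rw [mul_inv_cancel₀ (pow_ne_zero _ hq0), mul_one]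
    have hxint : IsIntegral A x := by
      refine ⟨Polynomial.X ^ m - Polynomial.C d, Polynomial.monic_X_pow_sub_C d hm.ne', ?_⟩
      simp [Polynomial.eval₂_sub, hxm]
    obtain ⟨b', hb'⟩ := hNkey x hxint
    refine ⟨b', hinjBL ?_⟩
    have hX : algebraMap A L (ϖ ^ (k + N)) ≠ 0 := by
      simp only [ne_eq, map_eq_zero_iff _ (FaithfulSMul.algebraMap_injective A L)]
      exact pow_ne_zero _ hϖ0
    rw [map_mul, ← IsScalarTower.algebraMap_apply, hb', ← mul_assoc, ← map_mul, ← pow_add,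
      hxdef, hq, ← map_pow]
    rw [mul_comm (algebraMap B L b), ← mul_assoc, mul_inv_cancel₀ hX, one_mul]
  -- Lemma C : if `ϖ^r ∣ b` in `B` then `ϖ^(r*m) ∣ a` where `aB = b^m`.
  have lemC : ∀ (r : ℕ) (b : B) (a : A), algebraMap A B a = b ^ m →
      algebraMap A B (ϖ ^ r) ∣ b → ϖ ^ (r * m) ∣ a := by
    intro r b a hab ⟨c, hc⟩
    obtain ⟨ac, hac⟩ := hpow c
    refine ⟨ac, hinj ?_⟩
    rw [hab, hc, mul_pow, ← map_pow, ← pow_mul, map_mul, hac]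
  -- conclusion
  refine ⟨2 * (N + 1), by omega, ?_⟩
  intro b b' hb hb' hcontra
  rw [hunif, Ideal.map_span, Set.image_singleton, Ideal.mem_span_singleton] at hb hb'
  rw [hmem] at hcontra
  obtain ⟨a, ha⟩ := hpow b
  obtain ⟨a', ha'⟩ := hpow b'
  have hb0 : b ≠ 0 := fun h => hb (h ▸ dvd_zero _)
  have hb'0 : b' ≠ 0 := fun h => hb' (h ▸ dvd_zero _)
  have ha0 : a ≠ 0 := by
    intro h
    apply hb0
    have : algebraMap A B a = 0 := by rw [h, map_zero]
    rw [ha] at this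
    exact pow_eq_zero_iff hm.ne' |>.mp this
  have ha'0 : a' ≠ 0 := by
    intro h
    apply hb'0
    have : algebraMap A B a' = 0 := by rw [h, map_zero]
    rw [ha'] at this
    exact pow_eq_zero_iff hm.ne' |>.mp this
  have haa' : algebraMap A B (a * a') = (b * b') ^ m := by
    rw [map_mul, ha, ha', mul_pow]
  have hdvd : ϖ ^ (2 * (N + 1) * m) ∣ a * a' := lemC _ _ _ haa' hcontra
  obtain ⟨j, u, hu⟩ := IsDiscreteValuationRing.eq_unit_mul_pow_irreducible ha0 hϖ
  obtain ⟨j', u', hu'⟩ := IsDiscreteValuationRing.eq_unit_mul_pow_irreducible ha'0 hϖ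
  have hjlt : j < (1 + N) * m := by
    by_contra hge
    push_neg at hge
    apply hb
    have : ϖ ^ ((1 + N) * m) ∣ a := by
      refine dvd_trans (pow_dvd_pow ϖ hge) ?_
      exact Dvd.intro_left _ hu.symm
    simpa [pow_one] using lemA 1 b a ha this
  have hj'lt : j' < (1 + N) * m := by
    by_contra hge
    push_neg at hge
    apply hb'
    have : ϖ ^ ((1 + N) * m) ∣ a' := by
      refine dvd_trans (pow_dvd_pow ϖ hge) ?_
      exact Dvd.intro_left _ hu'.symm
    simpa [pow_one] using lemA 1 b' a' ha' this
  have hfact : a * a' = ((u : A) * (u' : A)) * ϖ ^ (j + j') := by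
    rw [hu, hu', pow_add]; ring
  rw [hfact, IsUnit.dvd_mul_left (by exact (u.isUnit.mul u'.isUnit))] at hdvd
  have hle : 2 * (N + 1) * m ≤ j + j' := (pow_dvd_pow_iff hϖ0 hϖ.not_isUnit).mp hdvd
  have : 0 < m := hm
  nlinarith
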